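/- For j ≠ k in {0,1,2}, the operators satisfy [H_j, L_k] = L_k, [H_j, Λ_k] = −Λ_k, [H_j, V_j] = 0, [H_j, A_j] = 0, [H_j, V_k] = 2V_k, and [H_j, A_k] = −2A_k. -/

import Mathlib

/-- Index set for the orthonormal basis `v_{ij}`, `i ∈ {1,2}`, `j ∈ {0,1,2}`:
`(0, j)` stands for `v_{1j}` and `(1, j)` for `v_{2j}`. -/
abbrev Idx := Fin 2 × Fin 3

/-- A linear order key on the index set. -/
def key (a : Idx) : ℕ := a.1.val * 3 + a.2.val

noncomputable section

/-- Concrete model of the exterior algebra `Λ*W` of a 6-dimensional real inner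
product space `W` with orthonormal basis `v_{ij}`: functions on subsets of the
index set, with the `ℓ²` (Euclidean) inner product, so that the wedge monomials
in the `v_{ij}` form an orthonormal basis. -/
abbrev EW := EuclideanSpace ℝ (Finset Idx)

/-- The sign `(-1)^{#{b ∈ S | b < a}}`. -/
def sgn (a : Idx) (S : Finset Idx) : ℝ :=
  (-1 : ℝ) ^ (S.filter (fun b => key b < key a)).card

/-- `Eop a` is the wedge (exterior multiplication) operator with `v_a` on `Λ*W`. -/
def Eop (a : Idx) : Module.End ℝ EW where
  toFun f := WithLp.toLp 2 (fun (S : Finset Idx) => if a ∈ S then sgn a (S.erase a) * f (S.erase a) else 0)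
  map_add' f g := by
    ext S
    by_cases h : a ∈ S <;> simp [h, mul_add]
  map_smul' c f := by
    ext S
    by_cases h : a ∈ S <;> simp [h] <;> ring

/-- `Iop a` is the contraction (interior multiplication) operator with the vector
dual to `v_a` on `Λ*W`. -/
def Iop (a : Idx) : Module.End ℝ EW where
  toFun f := WithLp.toLp 2 (fun (S : Finset Idx) => if a ∈ S then 0 else sgn a S * f (insert a S))
  map_add' f g := by
    ext S
    by_cases h : a ∈ S <;> simp [h, mul_add]
  map_smul' c f := by
    ext S
    by_cases h : a ∈ S <;> simp [h] <;> ring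

/-- `L_0, L_1, L_2`: wedge with `ω_D = v_{11}∧v_{12} + v_{21}∧v_{22}`,
`-ω_2 = -(v_{10}∧v_{12} + v_{20}∧v_{22})`, `ω_1 = v_{10}∧v_{11} + v_{20}∧v_{21}`. -/
def Lop : Fin 3 → Module.End ℝ EW
  | 0 => Eop (0, 1) ∘ₗ Eop (0, 2) + Eop (1, 1) ∘ₗ Eop (1, 2)
  | 1 => -(Eop (0, 0) ∘ₗ Eop (0, 2) + Eop (1, 0) ∘ₗ Eop (1, 2))
  | 2 => Eop (0, 0) ∘ₗ Eop (0, 1) + Eop (1, 0) ∘ₗ Eop (1, 1)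

/-- `V_j`: wedge with the volume form `v_{1j} ∧ v_{2j}`. -/
def Vop (j : Fin 3) : Module.End ℝ EW := Eop (0, j) ∘ₗ Eop (1, j)

/-- `J = Σ_j (E_{2j}I_{1j} - E_{1j}I_{2j})`, the derivation of `Λ*W` with
`J(v_{1j}) = v_{2j}` and `J(v_{2j}) = -v_{1j}`. -/
def Jop : Module.End ℝ EW :=
  ∑ j : Fin 3, (Eop (1, j) ∘ₗ Iop (0, j) - Eop (0, j) ∘ₗ Iop (1, j))

/-- `Λ_j = L_j*`, adjoint with respect to the induced inner product. -/
def Λop (j : Fin 3) : Module.End ℝ EW := LinearMap.adjoint (Lop j)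

/-- `A_j = V_j*`, adjoint with respect to the induced inner product. -/
def Aop (j : Fin 3) : Module.End ℝ EW := LinearMap.adjoint (Vop j)

/-- `H_j = [L_j, Λ_j]`. -/
def Hop (j : Fin 3) : Module.End ℝ EW := ⁅Lop j, Λop j⁆

section

attribute [local instance] LieRing.ofAssociativeRing

def Nop (a : Idx) : Module.End ℝ EW where
  toFun f := WithLp.toLp 2 (fun (S : Finset Idx) => if a ∈ S then f S else 0)
  map_add' f g := by ext S; by_cases h : a ∈ S <;> simp [h]
  map_smul' c f := by ext S; by_cases h : a ∈ S <;> simp [h]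

lemma Eop_apply (a : Idx) (f : EW) (S : Finset Idx) :
    Eop a f S = if a ∈ S then sgn a (S.erase a) * f (S.erase a) else 0 := rfl
lemma Iop_apply (a : Idx) (f : EW) (S : Finset Idx) :
    Iop a f S = if a ∈ S then 0 else sgn a S * f (insert a S) := rfl
lemma Nop_apply (a : Idx) (f : EW) (S : Finset Idx) :
    Nop a f S = if a ∈ S then f S else 0 := rfl

lemma sgn_sq (a : Idx) (S : Finset Idx) : sgn a S * sgn a S = 1 := by
  rw [sgn, ← pow_add]; exact Even.neg_one_pow ⟨_, rfl⟩

lemma e_mul_i (a : Idx) : Eop a * Iop a = Nop a := by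
  ext f S
  simp only [Module.End.mul_apply, Eop_apply, Iop_apply, Nop_apply]
  by_cases h : a ∈ S
  · simp only [if_pos h, if_neg (Finset.notMem_erase a S), Finset.insert_erase h,
      ← mul_assoc, sgn_sq, one_mul]
  · simp [h]

lemma i_mul_e (a : Idx) : Iop a * Eop a = 1 - Nop a := by
  ext f S
  simp only [Module.End.mul_apply, Eop_apply, Iop_apply, LinearMap.sub_apply, Nop_apply,
    Module.End.one_apply]
  by_cases h : a ∈ S
  · simp [h, Nop_apply]
  · simp only [if_neg h, if_pos (Finset.mem_insert_self a S), Finset.erase_insert h,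
      ← mul_assoc, sgn_sq, one_mul, Nop_apply]
    simp [Nop_apply, h]

lemma n_mul_e_same (a : Idx) : Nop a * Eop a = Eop a := by
  ext f S
  simp only [Module.End.mul_apply, Eop_apply, Nop_apply]
  by_cases h : a ∈ S <;> simp [h]

lemma e_mul_n_same (a : Idx) : Eop a * Nop a = 0 := by
  ext f S
  simp only [Module.End.mul_apply, Eop_apply, Nop_apply, LinearMap.zero_apply]
  by_cases h : a ∈ S <;> simp [h]

lemma n_mul_i_same (a : Idx) : Nop a * Iop a = 0 := by
  ext f S
  simp only [Module.End.mul_apply, Iop_apply, Nop_apply, LinearMap.zero_apply]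
  by_cases h : a ∈ S <;> simp [h]

lemma i_mul_n_same (a : Idx) : Iop a * Nop a = Iop a := by
  ext f S
  simp only [Module.End.mul_apply, Iop_apply, Nop_apply]
  by_cases h : a ∈ S <;> simp [h]

lemma n_e_comm {a b : Idx} (h : a ≠ b) : Nop a * Eop b = Eop b * Nop a := by
  ext f S
  simp only [Module.End.mul_apply, Eop_apply, Nop_apply]
  by_cases hb : b ∈ S
  · by_cases ha : a ∈ S <;>
      simp [ha, hb, Finset.mem_erase, h, (Ne.symm h : b ≠ a)]
  · simp [hb]

lemma n_i_comm {a b : Idx} (h : a ≠ b) : Nop a * Iop b = Iop b * Nop a := by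
  ext f S
  simp only [Module.End.mul_apply, Iop_apply, Nop_apply]
  by_cases hb : b ∈ S
  · simp [hb]
  · by_cases ha : a ∈ S <;> simp [ha, hb, Finset.mem_insert, h, (Ne.symm h : b ≠ a)]

lemma n_n_comm (a b : Idx) : Nop a * Nop b = Nop b * Nop a := by
  ext f S
  simp only [Module.End.mul_apply, Nop_apply]
  by_cases ha : a ∈ S <;> by_cases hb : b ∈ S <;> simp [ha, hb]

lemma key_inj {a b : Idx} (h : key a = key b) : a = b := by
  revert h; revert a b; decide

lemma sgn_erase_self (a : Idx) (S : Finset Idx) : sgn a (S.erase a) = sgn a S := by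
  unfold sgn
  congr 1
  rw [Finset.filter_erase, Finset.erase_eq_of_notMem]
  simp

lemma sgn_insert (a b : Idx) {T : Finset Idx} (hb : b ∉ T) :
    sgn a (insert b T) = (if key b < key a then -1 else 1) * sgn a T := by
  unfold sgn
  rw [Finset.filter_insert]
  by_cases h : key b < key a
  · rw [if_pos h, if_pos h, Finset.card_insert_of_notMem (fun hc => hb (Finset.mem_of_mem_filter _ hc)),
      pow_succ]
    ring
  · rw [if_neg h, if_neg h, one_mul]

lemma ei_swap {a b : Idx} (h : a ≠ b) : Eop a * Iop b = -(Iop b * Eop a) := by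
  ext f S
  simp only [Module.End.mul_apply, LinearMap.neg_apply, PiLp.neg_apply, Eop_apply, Iop_apply]
  by_cases ha : a ∈ S
  · by_cases hb : b ∈ S
    · simp [ha, hb, Finset.mem_erase, Ne.symm h]
    · have hbe : b ∉ S.erase a := fun hc => hb (Finset.mem_of_mem_erase hc)
      have haI : a ∈ insert b S := Finset.mem_insert_of_mem ha
      rw [if_pos ha, if_neg hbe, if_neg hb, if_pos haI, Finset.erase_insert_of_ne (Ne.symm h)]
      obtain ⟨T, haT, rfl⟩ : ∃ T, a ∉ T ∧ S = insert a T :=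
        ⟨S.erase a, Finset.notMem_erase a S, (Finset.insert_erase ha).symm⟩
      rw [Finset.erase_insert haT]
      have hbT : b ∉ T := fun hc => hb (Finset.mem_insert_of_mem hc)
      rw [sgn_insert b a haT, sgn_insert a b hbT]
      rcases Nat.lt_trichotomy (key a) (key b) with hk | hk | hk
      · rw [if_pos hk, if_neg (by omega)]; ring
      · exact absurd (key_inj hk) h
      · rw [if_neg (by omega), if_pos hk]; ring
  · by_cases hb : b ∈ S
    · simp [ha, hb]
    · have : a ∉ insert b S := by
        simp [Finset.mem_insert, h, ha]
      simp [ha, hb, this]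

lemma toggle_involutive (a : Idx) :
    Function.Involutive (fun S : Finset Idx => if a ∈ S then S.erase a else insert a S) := by
  intro S
  by_cases h : a ∈ S
  · simp [h, Finset.notMem_erase, Finset.insert_erase h]
  · simp [h, Finset.mem_insert_self, Finset.erase_insert h]

lemma adjoint_Eop (a : Idx) : LinearMap.adjoint (Eop a) = Iop a := by
  symm
  rw [LinearMap.eq_adjoint_iff]
  intro f g
  simp only [PiLp.inner_apply, RCLike.inner_apply, conj_trivial]
  rw [← Equiv.sum_comp (Function.Involutive.toPerm _ (toggle_involutive a))
      (fun S => Eop a g S * f S)]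
  apply Finset.sum_congr rfl
  intro S _
  simp only [Function.Involutive.coe_toPerm]
  by_cases h : a ∈ S
  · simp [h, Iop_apply, Eop_apply, Finset.notMem_erase]
  · rw [if_neg h]
    simp only [Iop_apply, Eop_apply, if_neg h, if_pos (Finset.mem_insert_self a S),
      Finset.erase_insert h]
    ring

lemma adjoint_EE (a b : Idx) :
    LinearMap.adjoint (Eop a ∘ₗ Eop b) = Iop b * Iop a := by
  rw [LinearMap.adjoint_comp, adjoint_Eop, adjoint_Eop, Module.End.mul_eq_comp]

lemma ee_same (a : Idx) : Eop a * Eop a = 0 := by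
  ext f S
  simp only [Module.End.mul_apply, Eop_apply, LinearMap.zero_apply]
  by_cases h : a ∈ S <;> simp [h, Finset.notMem_erase]

lemma ii_same (a : Idx) : Iop a * Iop a = 0 := by
  ext f S
  simp only [Module.End.mul_apply, Iop_apply, LinearMap.zero_apply]
  by_cases h : a ∈ S <;> simp [h, Finset.mem_insert_self]

lemma comm_pair {a b : Idx} (h : a ≠ b) :
    ⁅Eop a * Eop b, Iop b * Iop a⁆ = Nop a + Nop b - 1 := by
  rw [Ring.lie_def]
  have h1 : Eop a * Eop b * (Iop b * Iop a) = Nop b * Nop a := by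
    calc Eop a * Eop b * (Iop b * Iop a) = Eop a * (Eop b * Iop b) * Iop a := by noncomm_ring
    _ = Eop a * Nop b * Iop a := by rw [e_mul_i]
    _ = Nop b * Eop a * Iop a := by rw [← n_e_comm (Ne.symm h)]
    _ = Nop b * Nop a := by rw [mul_assoc, e_mul_i]
  have h2 : Iop b * Iop a * (Eop a * Eop b) = (1 - Nop b) - Nop a * (1 - Nop b) := by
    calc Iop b * Iop a * (Eop a * Eop b) = Iop b * (Iop a * Eop a) * Eop b := by noncomm_ring
    _ = Iop b * (1 - Nop a) * Eop b := by rw [i_mul_e]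
    _ = Iop b * Eop b - Iop b * Nop a * Eop b := by noncomm_ring
    _ = (1 - Nop b) - Nop a * (1 - Nop b) := by
          rw [i_mul_e, ← n_i_comm h, mul_assoc, i_mul_e]
  rw [h1, h2, n_n_comm b a]
  noncomm_ring

lemma e_comm_ii {x c d : Idx} (hc : x ≠ c) (hd : x ≠ d) :
    Eop x * (Iop d * Iop c) = (Iop d * Iop c) * Eop x := by
  calc Eop x * (Iop d * Iop c) = (Eop x * Iop d) * Iop c := by rw [mul_assoc]
  _ = -(Iop d * Eop x) * Iop c := by rw [ei_swap hd]
  _ = -(Iop d * (Eop x * Iop c)) := by noncomm_ring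
  _ = -(Iop d * -(Iop c * Eop x)) := by rw [ei_swap hc]
  _ = (Iop d * Iop c) * Eop x := by noncomm_ring

lemma comm_cross {a b c d : Idx} (hac : a ≠ c) (had : a ≠ d) (hbc : b ≠ c) (hbd : b ≠ d) :
    ⁅Eop a * Eop b, Iop d * Iop c⁆ = 0 := by
  rw [Ring.lie_def, sub_eq_zero]
  calc (Eop a * Eop b) * (Iop d * Iop c) = Eop a * (Eop b * (Iop d * Iop c)) := by rw [mul_assoc]
  _ = Eop a * ((Iop d * Iop c) * Eop b) := by rw [e_comm_ii hbc hbd]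
  _ = (Eop a * (Iop d * Iop c)) * Eop b := by noncomm_ring
  _ = ((Iop d * Iop c) * Eop a) * Eop b := by rw [e_comm_ii hac had]
  _ = (Iop d * Iop c) * (Eop a * Eop b) := by noncomm_ring

lemma lieNE (c a : Idx) : ⁅Nop c, Eop a⁆ = if c = a then Eop a else 0 := by
  rcases eq_or_ne c a with rfl | h
  · rw [if_pos rfl, Ring.lie_def, n_mul_e_same, e_mul_n_same, sub_zero]
  · rw [if_neg h, Ring.lie_def, n_e_comm h, sub_self]

lemma lieNI (c a : Idx) : ⁅Nop c, Iop a⁆ = if c = a then -Iop a else 0 := by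
  rcases eq_or_ne c a with rfl | h
  · rw [if_pos rfl, Ring.lie_def, n_mul_i_same, i_mul_n_same, zero_sub]
  · rw [if_neg h, Ring.lie_def, n_i_comm h, sub_self]

lemma lie_mul' (x y z : Module.End ℝ EW) : ⁅x, y * z⁆ = ⁅x, y⁆ * z + y * ⁅x, z⁆ := by
  simp only [Ring.lie_def]
  noncomm_ring

lemma lieNEE (c a b : Idx) :
    ⁅Nop c, Eop a * Eop b⁆ =
      ((if c = a then (1:ℝ) else 0) + (if c = b then (1:ℝ) else 0)) • (Eop a * Eop b) := by
  rcases eq_or_ne a b with rfl | hab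
  · simp [ee_same]
  · rw [lie_mul', lieNE, lieNE]
    rcases eq_or_ne c a with rfl | h1 <;> rcases eq_or_ne c b with rfl | h2
    · exact absurd rfl hab
    · simp [h2]
    · simp [h1]
    · simp [h1, h2]

lemma lieNII (c a b : Idx) :
    ⁅Nop c, Iop a * Iop b⁆ =
      -(((if c = a then (1:ℝ) else 0) + (if c = b then (1:ℝ) else 0)) • (Iop a * Iop b)) := by
  rcases eq_or_ne a b with rfl | hab
  · simp [ii_same]
  · rw [lie_mul', lieNI, lieNI]
    rcases eq_or_ne c a with rfl | h1 <;> rcases eq_or_ne c b with rfl | h2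
    · exact absurd rfl hab
    · simp [h2]
    · simp [h1]
    · simp [h1, h2]

def wt (j : Fin 3) (a : Idx) : ℝ := if a.2 = j then 0 else 1

lemma Lop_eq0 : Lop 0 = Eop (0,1) * Eop (0,2) + Eop (1,1) * Eop (1,2) := rfl
lemma Lop_eq1 : Lop 1 = -(Eop (0,0) * Eop (0,2) + Eop (1,0) * Eop (1,2)) := rfl
lemma Lop_eq2 : Lop 2 = Eop (0,0) * Eop (0,1) + Eop (1,0) * Eop (1,1) := rfl

lemma Λop_eq0 : Λop 0 = Iop (0,2) * Iop (0,1) + Iop (1,2) * Iop (1,1) := by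
  have h : Λop 0 = LinearMap.adjoint (Eop (0,1) ∘ₗ Eop (0,2) + Eop (1,1) ∘ₗ Eop (1,2)) := rfl
  rw [h, map_add, adjoint_EE, adjoint_EE]

lemma Λop_eq1 : Λop 1 = -(Iop (0,2) * Iop (0,0) + Iop (1,2) * Iop (1,0)) := by
  have h : Λop 1 = LinearMap.adjoint (-(Eop (0,0) ∘ₗ Eop (0,2) + Eop (1,0) ∘ₗ Eop (1,2))) := rfl
  rw [h, map_neg, map_add, adjoint_EE, adjoint_EE]

lemma Λop_eq2 : Λop 2 = Iop (0,1) * Iop (0,0) + Iop (1,1) * Iop (1,0) := by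
  have h : Λop 2 = LinearMap.adjoint (Eop (0,0) ∘ₗ Eop (0,1) + Eop (1,0) ∘ₗ Eop (1,1)) := rfl
  rw [h, map_add, adjoint_EE, adjoint_EE]

lemma Vop_eq (j : Fin 3) : Vop j = Eop (0,j) * Eop (1,j) := rfl

lemma Aop_eq (j : Fin 3) : Aop j = Iop (1,j) * Iop (0,j) := by
  have h : Aop j = LinearMap.adjoint (Eop (0,j) ∘ₗ Eop (1,j)) := rfl
  rw [h, adjoint_EE]

lemma Hop_eq0 : Hop 0 = Nop (0,1) + Nop (0,2) + Nop (1,1) + Nop (1,2) - 2 := by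
  have h : Hop 0 = ⁅Lop 0, Λop 0⁆ := rfl
  rw [h, Lop_eq0, Λop_eq0, add_lie, lie_add, lie_add,
    comm_pair (by decide : ((0:Fin 2),(1:Fin 3)) ≠ (0,2)),
    comm_pair (by decide : ((1:Fin 2),(1:Fin 3)) ≠ (1,2)),
    comm_cross (by decide) (by decide) (by decide) (by decide),
    comm_cross (by decide) (by decide) (by decide) (by decide),
    show (2 : Module.End ℝ EW) = 1 + 1 by norm_num]
  noncomm_ring

lemma Hop_eq1 : Hop 1 = Nop (0,0) + Nop (0,2) + Nop (1,0) + Nop (1,2) - 2 := by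
  have h : Hop 1 = ⁅Lop 1, Λop 1⁆ := rfl
  rw [h, Lop_eq1, Λop_eq1, neg_lie, lie_neg, neg_neg, add_lie, lie_add, lie_add,
    comm_pair (by decide : ((0:Fin 2),(0:Fin 3)) ≠ (0,2)),
    comm_pair (by decide : ((1:Fin 2),(0:Fin 3)) ≠ (1,2)),
    comm_cross (by decide) (by decide) (by decide) (by decide),
    comm_cross (by decide) (by decide) (by decide) (by decide),
    show (2 : Module.End ℝ EW) = 1 + 1 by norm_num]
  noncomm_ring

lemma Hop_eq2 : Hop 2 = Nop (0,0) + Nop (0,1) + Nop (1,0) + Nop (1,1) - 2 := by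
  have h : Hop 2 = ⁅Lop 2, Λop 2⁆ := rfl
  rw [h, Lop_eq2, Λop_eq2, add_lie, lie_add, lie_add,
    comm_pair (by decide : ((0:Fin 2),(0:Fin 3)) ≠ (0,1)),
    comm_pair (by decide : ((1:Fin 2),(0:Fin 3)) ≠ (1,1)),
    comm_cross (by decide) (by decide) (by decide) (by decide),
    comm_cross (by decide) (by decide) (by decide) (by decide),
    show (2 : Module.End ℝ EW) = 1 + 1 by norm_num]
  noncomm_ring

lemma lie_two (X : Module.End ℝ EW) : ⁅(2 : Module.End ℝ EW), X⁆ = 0 := by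
  rw [Ring.lie_def]
  noncomm_ring

lemma delta0 (x : Idx) :
    (if ((0:Fin 2),(1:Fin 3)) = x then (1:ℝ) else 0) + (if ((0:Fin 2),(2:Fin 3)) = x then (1:ℝ) else 0)
      + (if ((1:Fin 2),(1:Fin 3)) = x then (1:ℝ) else 0) + (if ((1:Fin 2),(2:Fin 3)) = x then (1:ℝ) else 0)
      = wt 0 x := by
  obtain ⟨i, j⟩ := x
  fin_cases i <;> fin_cases j <;> norm_num [wt, Prod.ext_iff, Fin.ext_iff]

lemma delta1 (x : Idx) :
    (if ((0:Fin 2),(0:Fin 3)) = x then (1:ℝ) else 0) + (if ((0:Fin 2),(2:Fin 3)) = x then (1:ℝ) else 0)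
      + (if ((1:Fin 2),(0:Fin 3)) = x then (1:ℝ) else 0) + (if ((1:Fin 2),(2:Fin 3)) = x then (1:ℝ) else 0)
      = wt 1 x := by
  obtain ⟨i, j⟩ := x
  fin_cases i <;> fin_cases j <;> norm_num [wt, Prod.ext_iff, Fin.ext_iff]

lemma delta2 (x : Idx) :
    (if ((0:Fin 2),(0:Fin 3)) = x then (1:ℝ) else 0) + (if ((0:Fin 2),(1:Fin 3)) = x then (1:ℝ) else 0)
      + (if ((1:Fin 2),(0:Fin 3)) = x then (1:ℝ) else 0) + (if ((1:Fin 2),(1:Fin 3)) = x then (1:ℝ) else 0)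
      = wt 2 x := by
  obtain ⟨i, j⟩ := x
  fin_cases i <;> fin_cases j <;> norm_num [wt, Prod.ext_iff, Fin.ext_iff]

lemma HEE0 (a b : Idx) : ⁅Hop 0, Eop a * Eop b⁆ = (wt 0 a + wt 0 b) • (Eop a * Eop b) := by
  rw [Hop_eq0, sub_lie, add_lie, add_lie, add_lie, lieNEE, lieNEE, lieNEE, lieNEE,
    lie_two, sub_zero, ← delta0 a, ← delta0 b]
  module

lemma HEE1 (a b : Idx) : ⁅Hop 1, Eop a * Eop b⁆ = (wt 1 a + wt 1 b) • (Eop a * Eop b) := by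
  rw [Hop_eq1, sub_lie, add_lie, add_lie, add_lie, lieNEE, lieNEE, lieNEE, lieNEE,
    lie_two, sub_zero, ← delta1 a, ← delta1 b]
  module

lemma HEE2 (a b : Idx) : ⁅Hop 2, Eop a * Eop b⁆ = (wt 2 a + wt 2 b) • (Eop a * Eop b) := by
  rw [Hop_eq2, sub_lie, add_lie, add_lie, add_lie, lieNEE, lieNEE, lieNEE, lieNEE,
    lie_two, sub_zero, ← delta2 a, ← delta2 b]
  module

lemma HII0 (a b : Idx) : ⁅Hop 0, Iop a * Iop b⁆ = -((wt 0 a + wt 0 b) • (Iop a * Iop b)) := by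
  rw [Hop_eq0, sub_lie, add_lie, add_lie, add_lie, lieNII, lieNII, lieNII, lieNII,
    lie_two, sub_zero, ← delta0 a, ← delta0 b]
  module

lemma HII1 (a b : Idx) : ⁅Hop 1, Iop a * Iop b⁆ = -((wt 1 a + wt 1 b) • (Iop a * Iop b)) := by
  rw [Hop_eq1, sub_lie, add_lie, add_lie, add_lie, lieNII, lieNII, lieNII, lieNII,
    lie_two, sub_zero, ← delta1 a, ← delta1 b]
  module

lemma HII2 (a b : Idx) : ⁅Hop 2, Iop a * Iop b⁆ = -((wt 2 a + wt 2 b) • (Iop a * Iop b)) := by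
  rw [Hop_eq2, sub_lie, add_lie, add_lie, add_lie, lieNII, lieNII, lieNII, lieNII,
    lie_two, sub_zero, ← delta2 a, ← delta2 b]
  module

lemma case01 :
    ⁅Hop 0, Lop 1⁆ = Lop 1 ∧ ⁅Hop 0, Λop 1⁆ = -Λop 1 ∧
    ⁅Hop 0, Vop 0⁆ = 0 ∧ ⁅Hop 0, Aop 0⁆ = 0 ∧
    ⁅Hop 0, Vop 1⁆ = (2 : ℝ) • Vop 1 ∧ ⁅Hop 0, Aop 1⁆ = -((2 : ℝ) • Aop 1) := by
  refine ⟨?_, ?_, ?_, ?_, ?_, ?_⟩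
  · rw [Lop_eq1, lie_neg, lie_add, HEE0, HEE0]
    norm_num [wt, Fin.ext_iff]
    try abel
  · rw [Λop_eq1, lie_neg, lie_add, HII0, HII0]
    norm_num [wt, Fin.ext_iff]
    try abel
  · rw [Vop_eq, HEE0]
    norm_num [wt, Fin.ext_iff]
  · rw [Aop_eq, HII0]
    norm_num [wt, Fin.ext_iff]
  · rw [Vop_eq, HEE0]
    norm_num [wt, Fin.ext_iff]
  · rw [Aop_eq, HII0]
    norm_num [wt, Fin.ext_iff]

lemma case02 :
    ⁅Hop 0, Lop 2⁆ = Lop 2 ∧ ⁅Hop 0, Λop 2⁆ = -Λop 2 ∧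
    ⁅Hop 0, Vop 0⁆ = 0 ∧ ⁅Hop 0, Aop 0⁆ = 0 ∧
    ⁅Hop 0, Vop 2⁆ = (2 : ℝ) • Vop 2 ∧ ⁅Hop 0, Aop 2⁆ = -((2 : ℝ) • Aop 2) := by
  refine ⟨?_, ?_, ?_, ?_, ?_, ?_⟩
  · rw [Lop_eq2, lie_add, HEE0, HEE0]
    norm_num [wt, Fin.ext_iff]
    try abel
  · rw [Λop_eq2, lie_add, HII0, HII0]
    norm_num [wt, Fin.ext_iff]
    try abel
  · rw [Vop_eq, HEE0]
    norm_num [wt, Fin.ext_iff]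
  · rw [Aop_eq, HII0]
    norm_num [wt, Fin.ext_iff]
  · rw [Vop_eq, HEE0]
    norm_num [wt, Fin.ext_iff]
  · rw [Aop_eq, HII0]
    norm_num [wt, Fin.ext_iff]

lemma case10 :
    ⁅Hop 1, Lop 0⁆ = Lop 0 ∧ ⁅Hop 1, Λop 0⁆ = -Λop 0 ∧
    ⁅Hop 1, Vop 1⁆ = 0 ∧ ⁅Hop 1, Aop 1⁆ = 0 ∧
    ⁅Hop 1, Vop 0⁆ = (2 : ℝ) • Vop 0 ∧ ⁅Hop 1, Aop 0⁆ = -((2 : ℝ) • Aop 0) := by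
  refine ⟨?_, ?_, ?_, ?_, ?_, ?_⟩
  · rw [Lop_eq0, lie_add, HEE1, HEE1]
    norm_num [wt, Fin.ext_iff]
    try abel
  · rw [Λop_eq0, lie_add, HII1, HII1]
    norm_num [wt, Fin.ext_iff]
    try abel
  · rw [Vop_eq, HEE1]
    norm_num [wt, Fin.ext_iff]
  · rw [Aop_eq, HII1]
    norm_num [wt, Fin.ext_iff]
  · rw [Vop_eq, HEE1]
    norm_num [wt, Fin.ext_iff]
  · rw [Aop_eq, HII1]
    norm_num [wt, Fin.ext_iff]

lemma case12 :
    ⁅Hop 1, Lop 2⁆ = Lop 2 ∧ ⁅Hop 1, Λop 2⁆ = -Λop 2 ∧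
    ⁅Hop 1, Vop 1⁆ = 0 ∧ ⁅Hop 1, Aop 1⁆ = 0 ∧
    ⁅Hop 1, Vop 2⁆ = (2 : ℝ) • Vop 2 ∧ ⁅Hop 1, Aop 2⁆ = -((2 : ℝ) • Aop 2) := by
  refine ⟨?_, ?_, ?_, ?_, ?_, ?_⟩
  · rw [Lop_eq2, lie_add, HEE1, HEE1]
    norm_num [wt, Fin.ext_iff]
    try abel
  · rw [Λop_eq2, lie_add, HII1, HII1]
    norm_num [wt, Fin.ext_iff]
    try abel
  · rw [Vop_eq, HEE1]
    norm_num [wt, Fin.ext_iff]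
  · rw [Aop_eq, HII1]
    norm_num [wt, Fin.ext_iff]
  · rw [Vop_eq, HEE1]
    norm_num [wt, Fin.ext_iff]
  · rw [Aop_eq, HII1]
    norm_num [wt, Fin.ext_iff]

lemma case20 :
    ⁅Hop 2, Lop 0⁆ = Lop 0 ∧ ⁅Hop 2, Λop 0⁆ = -Λop 0 ∧
    ⁅Hop 2, Vop 2⁆ = 0 ∧ ⁅Hop 2, Aop 2⁆ = 0 ∧
    ⁅Hop 2, Vop 0⁆ = (2 : ℝ) • Vop 0 ∧ ⁅Hop 2, Aop 0⁆ = -((2 : ℝ) • Aop 0) := by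
  refine ⟨?_, ?_, ?_, ?_, ?_, ?_⟩
  · rw [Lop_eq0, lie_add, HEE2, HEE2]
    norm_num [wt, Fin.ext_iff]
    try abel
  · rw [Λop_eq0, lie_add, HII2, HII2]
    norm_num [wt, Fin.ext_iff]
    try abel
  · rw [Vop_eq, HEE2]
    norm_num [wt, Fin.ext_iff]
  · rw [Aop_eq, HII2]
    norm_num [wt, Fin.ext_iff]
  · rw [Vop_eq, HEE2]
    norm_num [wt, Fin.ext_iff]
  · rw [Aop_eq, HII2]
    norm_num [wt, Fin.ext_iff]

lemma case21 :
    ⁅Hop 2, Lop 1⁆ = Lop 1 ∧ ⁅Hop 2, Λop 1⁆ = -Λop 1 ∧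
    ⁅Hop 2, Vop 2⁆ = 0 ∧ ⁅Hop 2, Aop 2⁆ = 0 ∧
    ⁅Hop 2, Vop 1⁆ = (2 : ℝ) • Vop 1 ∧ ⁅Hop 2, Aop 1⁆ = -((2 : ℝ) • Aop 1) := by
  refine ⟨?_, ?_, ?_, ?_, ?_, ?_⟩
  · rw [Lop_eq1, lie_neg, lie_add, HEE2, HEE2]
    norm_num [wt, Fin.ext_iff]
    try abel
  · rw [Λop_eq1, lie_neg, lie_add, HII2, HII2]
    norm_num [wt, Fin.ext_iff]
    try abel
  · rw [Vop_eq, HEE2]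
    norm_num [wt, Fin.ext_iff]
  · rw [Aop_eq, HII2]
    norm_num [wt, Fin.ext_iff]
  · rw [Vop_eq, HEE2]
    norm_num [wt, Fin.ext_iff]
  · rw [Aop_eq, HII2]
    norm_num [wt, Fin.ext_iff]

end

/-- For `j ≠ k`: `[H_j, L_k] = L_k`, `[H_j, Λ_k] = -Λ_k`, `[H_j, V_j] = 0`,
`[H_j, A_j] = 0`, `[H_j, V_k] = 2V_k`, `[H_j, A_k] = -2A_k`. -/
theorem H_weights :
    ∀ j k : Fin 3, j ≠ k →
      ⁅Hop j, Lop k⁆ = Lop k ∧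
      ⁅Hop j, Λop k⁆ = -Λop k ∧
      ⁅Hop j, Vop j⁆ = 0 ∧
      ⁅Hop j, Aop j⁆ = 0 ∧
      ⁅Hop j, Vop k⁆ = (2 : ℝ) • Vop k ∧
      ⁅Hop j, Aop k⁆ = -((2 : ℝ) • Aop k) := by
  intro j k hjk
  fin_cases j <;> fin_cases k <;>
    first
      | exact absurd rfl hjk
      | exact case01 | exact case02 | exact case10
      | exact case12 | exact case20 | exact case21
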